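/- Define sequences x_i, y_i of natural numbers by x_1 = 1, y_1 = n-1, and for 2 ≤ i ≤ n-2: x_i = x_{i-1} + y_{i-1}·(n-i), y_i = y_{i-1} + x_{i-1}·(n-i). Then x_{n-2} + y_{n-2} = n!/2 for every n ≥ 3. -/

import Mathlib

/-- If `x 1 = 1`, `y 1 = n - 1` and for `2 ≤ i ≤ n - 2` one has
`x i = x (i-1) + y (i-1) * (n-i)` and `y i = y (i-1) + x (i-1) * (n-i)`, then
`x (n-2) + y (n-2) = n!/2` for every `n ≥ 3`. -/
theorem pv_rank_xy_recursion (n : ℕ) (hn : 3 ≤ n) (x y : ℕ → ℕ)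
    (hx1 : x 1 = 1) (hy1 : y 1 = n - 1)
    (hx : ∀ i, 2 ≤ i → i ≤ n - 2 → x i = x (i - 1) + y (i - 1) * (n - i))
    (hy : ∀ i, 2 ≤ i → i ≤ n - 2 → y i = y (i - 1) + x (i - 1) * (n - i)) :
    x (n - 2) + y (n - 2) = n.factorial / 2 := by
  have key : ∀ i, 1 ≤ i → i ≤ n - 2 → (x i + y i) * (n - i).factorial = n.factorial := by
    intro i h1 h2
    induction i with
    | zero => omega
    | succ k ih =>
      rcases Nat.lt_or_ge k 1 with hk | hk
      · -- base case i = 1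
        have hk0 : k = 0 := by omega
        subst hk0
        have hsum : x 1 + y 1 = n := by omega
        have hpos : 0 < n := by omega
        have := Nat.mul_factorial_pred hpos.ne'
        simpa [hsum] using this
      · -- inductive step
        have hk2 : k ≤ n - 2 := by omega
        have ihk := ih hk hk2
        have hxk := hx (k + 1) (by omega) h2
        have hyk := hy (k + 1) (by omega) h2
        simp only [Nat.add_sub_cancel] at hxk hyk
        have hsum : x (k+1) + y (k+1) = (x k + y k) * (n - k) := by
          have hnk : n - (k + 1) + 1 = n - k := by omega
          rw [hxk, hyk, ← hnk]; ring
        have hfac : (n - k) * (n - (k+1)).factorial = (n - k).factorial := by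
          have h1 : n - (k+1) = (n - k) - 1 := by omega
          have h2 : 0 < n - k := by omega
          rw [h1]; exact Nat.mul_factorial_pred h2.ne'
        calc (x (k+1) + y (k+1)) * (n - (k+1)).factorial
            = (x k + y k) * ((n - k) * (n - (k+1)).factorial) := by rw [hsum]; ring
          _ = (x k + y k) * (n - k).factorial := by rw [hfac]
          _ = n.factorial := ihk
  have h := key (n - 2) (by omega) le_rfl
  have h2 : n - (n - 2) = 2 := by omega
  rw [h2] at h
  simp [Nat.factorial] at h
  omega
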